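/- With d̄ as above (weighted path distance with weight exp(η‖·‖)/ε), one has the two-sided bound: d̄(x,y) ≤ (‖x−y‖/ε)·exp(η(‖x‖∨‖y‖)) for all x,y; and whenever d̄(x,y) < 1, d̄(x,y) ≥ (‖x−y‖/ε)·exp(η·max(‖x‖∨‖y‖ − J, 0)) where J = ε·exp(−η·max(‖x‖∨‖y‖ − ε,0)). -/

import Mathlib

open Real

/-- The weighted path distance with weight `exp(η‖·‖)/ε`: infimum over unit-speed
`C¹` paths from `x` to `y` of `(1/ε)∫₀ᵀ exp(η‖ψ(t)‖) dt`. -/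
noncomputable def pathDist {H : Type*} [NormedAddCommGroup H] [InnerProductSpace ℝ H]
    (ε η : ℝ) (x y : H) : ℝ :=
  sInf { r : ℝ | ∃ T : ℝ, 0 < T ∧ ∃ ψ ψ' : ℝ → H, ψ 0 = x ∧ ψ T = y ∧
    (∀ t ∈ Set.Icc (0:ℝ) T, HasDerivAt ψ (ψ' t) t ∧ ‖ψ' t‖ = 1) ∧
    r = (1/ε) * ∫ t in (0:ℝ)..T, exp (η * ‖ψ t‖) }

namespace PathDistAux

variable {H : Type*} [NormedAddCommGroup H] [InnerProductSpace ℝ H]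

/-- Every element of the defining set is nonnegative. -/
lemma mem_nonneg (ε η : ℝ) (hε : 0 < ε) (x y : H) :
    ∀ r ∈ { r : ℝ | ∃ T : ℝ, 0 < T ∧ ∃ ψ ψ' : ℝ → H, ψ 0 = x ∧ ψ T = y ∧
      (∀ t ∈ Set.Icc (0:ℝ) T, HasDerivAt ψ (ψ' t) t ∧ ‖ψ' t‖ = 1) ∧
      r = (1/ε) * ∫ t in (0:ℝ)..T, exp (η * ‖ψ t‖) }, 0 ≤ r := by
  rintro r ⟨T, hT, ψ, ψ', h0, hTy, hder, rfl⟩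
  have h1 : (0:ℝ) ≤ ∫ t in (0:ℝ)..T, exp (η * ‖ψ t‖) :=
    intervalIntegral.integral_nonneg hT.le (fun u _ => (exp_pos _).le)
  positivity

lemma bddBelow_set (ε η : ℝ) (hε : 0 < ε) (x y : H) :
    BddBelow { r : ℝ | ∃ T : ℝ, 0 < T ∧ ∃ ψ ψ' : ℝ → H, ψ 0 = x ∧ ψ T = y ∧
      (∀ t ∈ Set.Icc (0:ℝ) T, HasDerivAt ψ (ψ' t) t ∧ ‖ψ' t‖ = 1) ∧
      r = (1/ε) * ∫ t in (0:ℝ)..T, exp (η * ‖ψ t‖) } :=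
  ⟨0, fun r hr => mem_nonneg ε η hε x y r hr⟩

lemma pathDist_nonneg (ε η : ℝ) (hε : 0 < ε) (x y : H) : 0 ≤ pathDist ε η x y :=
  Real.sInf_nonneg (mem_nonneg ε η hε x y)

/-- The per-path lower bound. -/
lemma path_cost_lower (ε η : ℝ) (hε : 0 < ε) (hη : 0 < η) (x y : H) {T : ℝ} (hT : 0 < T)
    {ψ ψ' : ℝ → H} (h0 : ψ 0 = x) (hTy : ψ T = y)
    (hder : ∀ t ∈ Set.Icc (0:ℝ) T, HasDerivAt ψ (ψ' t) t ∧ ‖ψ' t‖ = 1)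
    (hr : (1/ε) * (∫ t in (0:ℝ)..T, exp (η * ‖ψ t‖)) < 1) :
    (‖x - y‖ / ε) *
        exp (η * max (max ‖x‖ ‖y‖ - ε * exp (-η * max (max ‖x‖ ‖y‖ - ε) 0)) 0)
      ≤ (1/ε) * ∫ t in (0:ℝ)..T, exp (η * ‖ψ t‖) := by
  set M := max ‖x‖ ‖y‖ with hM
  set J := ε * exp (-η * max (M - ε) 0) with hJ
  have hderivW : ∀ t ∈ Set.Icc (0:ℝ) T, HasDerivWithinAt ψ (ψ' t) (Set.Icc (0:ℝ) T) t :=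
    fun t ht => (hder t ht).1.hasDerivWithinAt
  -- Lipschitz from 0
  have lip1 : ∀ t ∈ Set.Icc (0:ℝ) T, ‖ψ t - x‖ ≤ t := by
    intro t ht
    have := norm_image_sub_le_of_norm_deriv_le_segment' hderivW
      (fun s hs => (hder s (Set.Ico_subset_Icc_self hs)).2.le) t ht
    rw [h0] at this; simpa using this
  -- Lipschitz to T
  have lip2 : ∀ t ∈ Set.Icc (0:ℝ) T, ‖y - ψ t‖ ≤ T - t := by
    intro t ht
    have hsub : Set.Icc t T ⊆ Set.Icc (0:ℝ) T := Set.Icc_subset_Icc ht.1 le_rfl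
    have hW : ∀ s ∈ Set.Icc t T, HasDerivWithinAt ψ (ψ' s) (Set.Icc t T) s :=
      fun s hs => (hderivW s (hsub hs)).mono hsub
    have := norm_image_sub_le_of_norm_deriv_le_segment' hW
      (fun s hs => (hder s (hsub (Set.Ico_subset_Icc_self hs))).2.le) T
      (Set.right_mem_Icc.2 ht.2)
    rw [hTy] at this; simpa using this
  have hxyT : ‖x - y‖ ≤ T := by
    have := lip2 0 (Set.left_mem_Icc.2 hT.le)
    rw [h0] at this
    simpa [norm_sub_rev] using this
  -- pointwise lower bound on ‖ψ t‖
  have hψlb : ∀ t ∈ Set.Icc (0:ℝ) T, max (M - T) 0 ≤ ‖ψ t‖ := by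
    intro t ht
    refine max_le ?_ (norm_nonneg _)
    have hx' : ‖x‖ ≤ ‖ψ t‖ + T := by
      have h1 : ‖x‖ ≤ ‖ψ t‖ + ‖ψ t - x‖ := by
        have := norm_sub_norm_le (ψ t) x
        have h2 := norm_sub_rev (ψ t) x
        linarith [norm_le_insert (ψ t) x, abs_norm_sub_norm_le (ψ t) x,
          abs_le.1 (abs_norm_sub_norm_le (ψ t) x)]
      linarith [lip1 t ht, ht.2]
    have hy' : ‖y‖ ≤ ‖ψ t‖ + T := by
      have h1 : ‖y‖ ≤ ‖ψ t‖ + ‖y - ψ t‖ := by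
        linarith [abs_le.1 (abs_norm_sub_norm_le y (ψ t))]
      linarith [lip2 t ht, ht.1]
    have : M ≤ ‖ψ t‖ + T := max_le hx' hy'
    linarith
  -- continuity and integrability
  have hψcont : ContinuousOn ψ (Set.Icc (0:ℝ) T) :=
    fun t ht => (hder t ht).1.continuousAt.continuousWithinAt
  have hcont : ContinuousOn (fun t => exp (η * ‖ψ t‖)) (Set.Icc (0:ℝ) T) :=
    Real.continuous_exp.comp_continuousOn (continuousOn_const.mul hψcont.norm)
  have hInt : IntervalIntegrable (fun t => exp (η * ‖ψ t‖)) MeasureTheory.volume 0 T := by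
    apply hcont.intervalIntegrable_of_Icc hT.le
  -- integral lower bound with m = max (M - T) 0
  have key : ∀ m : ℝ, (∀ t ∈ Set.Icc (0:ℝ) T, m ≤ ‖ψ t‖) →
      (T/ε) * exp (η * m) ≤ (1/ε) * ∫ t in (0:ℝ)..T, exp (η * ‖ψ t‖) := by
    intro m hm
    have h1 : (∫ _ in (0:ℝ)..T, exp (η * m)) ≤ ∫ t in (0:ℝ)..T, exp (η * ‖ψ t‖) :=
      intervalIntegral.integral_mono_on hT.le intervalIntegrable_const hInt
        (fun t ht => exp_le_exp.2 (mul_le_mul_of_nonneg_left (hm t ht) hη.le))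
    rw [intervalIntegral.integral_const, smul_eq_mul, sub_zero] at h1
    have : (1/ε) * (T * exp (η * m)) ≤ (1/ε) * ∫ t in (0:ℝ)..T, exp (η * ‖ψ t‖) := by
      apply mul_le_mul_of_nonneg_left h1 (by positivity)
    calc (T/ε) * exp (η * m) = (1/ε) * (T * exp (η * m)) := by ring
    _ ≤ _ := this
  have rlb := key (max (M - T) 0) hψlb
  -- T ≤ ε
  have hTε : T ≤ ε := by
    by_contra hc
    push_neg at hc
    have h1 : (1:ℝ) ≤ exp (η * max (M - T) 0) := by
      rw [← exp_zero]; apply exp_le_exp.2; positivity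
    have h2 : (1:ℝ) < T / ε := (one_lt_div hε).2 hc
    nlinarith [exp_pos (η * max (M - T) 0)]
  -- T < J
  have hm1 : max (M - ε) 0 ≤ max (M - T) 0 :=
    max_le_max (by linarith) le_rfl
  have rlb1 : (T/ε) * exp (η * max (M - ε) 0) ≤ (1/ε) * ∫ t in (0:ℝ)..T, exp (η * ‖ψ t‖) := by
    refine le_trans ?_ rlb
    have := exp_le_exp.2 (mul_le_mul_of_nonneg_left hm1 hη.le)
    apply mul_le_mul_of_nonneg_left this (by positivity)
  have hTJ : T ≤ J := by
    have h1 : (T/ε) * exp (η * max (M - ε) 0) < 1 := lt_of_le_of_lt rlb1 hr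
    rw [div_mul_eq_mul_div, div_lt_one hε] at h1
    have he := exp_pos (η * max (M - ε) 0)
    rw [hJ, neg_mul, exp_neg, ← div_eq_mul_inv, le_div_iff₀ he]
    linarith
  -- conclude
  have hm2 : max (M - J) 0 ≤ max (M - T) 0 := max_le_max (by linarith) le_rfl
  refine le_trans ?_ rlb
  have h1 : exp (η * max (M - J) 0) ≤ exp (η * max (M - T) 0) :=
    exp_le_exp.2 (mul_le_mul_of_nonneg_left hm2 hη.le)
  have h2 : ‖x - y‖ / ε ≤ T / ε := by gcongr
  exact mul_le_mul h2 h1 (exp_pos _).le (by positivity)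


/-- Segment path: upper bound (and nonemptiness) when `x ≠ y`. -/
lemma segment_upper (ε η : ℝ) (hε : 0 < ε) (hη : 0 < η) (x y : H) (hxy : x ≠ y) :
    ∃ r ∈ { r : ℝ | ∃ T : ℝ, 0 < T ∧ ∃ ψ ψ' : ℝ → H, ψ 0 = x ∧ ψ T = y ∧
      (∀ t ∈ Set.Icc (0:ℝ) T, HasDerivAt ψ (ψ' t) t ∧ ‖ψ' t‖ = 1) ∧
      r = (1/ε) * ∫ t in (0:ℝ)..T, exp (η * ‖ψ t‖) },
      r ≤ (‖x - y‖ / ε) * exp (η * max ‖x‖ ‖y‖) := by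
  set L := ‖y - x‖ with hL
  have hL0 : 0 < L := norm_pos_iff.2 (sub_ne_zero.2 (Ne.symm hxy))
  set v : H := L⁻¹ • (y - x) with hv
  have hvn : ‖v‖ = 1 := by
    rw [hv, norm_smul, Real.norm_eq_abs, abs_inv, abs_of_pos hL0, ← hL,
      inv_mul_cancel₀ hL0.ne']
  have hψd : ∀ t : ℝ, HasDerivAt (fun s : ℝ => x + s • v) v t := by
    intro t
    have h := ((hasDerivAt_id t).smul_const v).const_add x
    simpa using h
  have hψ0 : x + (0:ℝ) • v = x := by simp
  have hψL : x + L • v = y := by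
    rw [hv, smul_smul, mul_inv_cancel₀ hL0.ne', one_smul]
    abel
  refine ⟨(1/ε) * ∫ t in (0:ℝ)..L, exp (η * ‖x + t • v‖),
    ⟨L, hL0, fun s => x + s • v, fun _ => v, hψ0, hψL,
      fun t _ => ⟨hψd t, hvn⟩, rfl⟩, ?_⟩
  have hnb : ∀ t ∈ Set.Icc (0:ℝ) L, ‖x + t • v‖ ≤ max ‖x‖ ‖y‖ := by
    intro t ht
    have hs0 : 0 ≤ t / L := div_nonneg ht.1 hL0.le
    have hs1 : t / L ≤ 1 := (div_le_one hL0).2 ht.2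
    have hrepr : x + t • v = (1 - t/L) • x + (t/L) • y := by
      rw [hv, smul_smul, show t * L⁻¹ = t / L from by ring]
      module
    rw [hrepr]
    calc ‖(1 - t/L) • x + (t/L) • y‖ ≤ ‖(1 - t/L) • x‖ + ‖(t/L) • y‖ := norm_add_le _ _
    _ = (1 - t/L) * ‖x‖ + (t/L) * ‖y‖ := by
        rw [norm_smul, norm_smul, Real.norm_eq_abs, Real.norm_eq_abs,
          abs_of_nonneg (by linarith), abs_of_nonneg hs0]
    _ ≤ (1 - t/L) * max ‖x‖ ‖y‖ + (t/L) * max ‖x‖ ‖y‖ := by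
        gcongr
        · exact le_max_left _ _
        · exact le_max_right _ _
    _ = max ‖x‖ ‖y‖ := by ring
  have hcont : Continuous fun t : ℝ => exp (η * ‖x + t • v‖) := by fun_prop
  have hIb : (∫ t in (0:ℝ)..L, exp (η * ‖x + t • v‖)) ≤ L * exp (η * max ‖x‖ ‖y‖) := by
    have h1 : (∫ t in (0:ℝ)..L, exp (η * ‖x + t • v‖))
        ≤ ∫ _ in (0:ℝ)..L, exp (η * max ‖x‖ ‖y‖) :=
      intervalIntegral.integral_mono_on hL0.le (hcont.intervalIntegrable _ _)
        intervalIntegrable_const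
        (fun t ht => exp_le_exp.2 (mul_le_mul_of_nonneg_left (hnb t ht) hη.le))
    rwa [intervalIntegral.integral_const, smul_eq_mul, sub_zero] at h1
  have hLxy : ‖x - y‖ = L := by rw [hL, norm_sub_rev]
  calc (1/ε) * ∫ t in (0:ℝ)..L, exp (η * ‖x + t • v‖)
      ≤ (1/ε) * (L * exp (η * max ‖x‖ ‖y‖)) := by
        apply mul_le_mul_of_nonneg_left hIb (by positivity)
  _ = (‖x - y‖ / ε) * exp (η * max ‖x‖ ‖y‖) := by rw [hLxy]; ring

/-- Small circular loops: `pathDist x x ≤ 0` when an orthonormal pair exists. -/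
lemma circle_upper (ε η : ℝ) (hε : 0 < ε) (hη : 0 < η) (x : H)
    {e₁ e₂ : H} (he1 : ‖e₁‖ = 1) (he2 : ‖e₂‖ = 1) (he12 : (inner ℝ e₁ e₂ : ℝ) = 0) :
    pathDist ε η x x ≤ 0 := by
  have hn2 : ∀ a b : ℝ, ‖a • e₁ + b • e₂‖^2 = a^2 + b^2 := by
    intro a b
    rw [norm_add_sq_real]
    have hin : (inner ℝ (a • e₁) (b • e₂) : ℝ) = a * b * (inner ℝ e₁ e₂ : ℝ) := by
      rw [real_inner_smul_left, real_inner_smul_right]; ring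
    rw [hin, he12, norm_smul, norm_smul, he1, he2, Real.norm_eq_abs, Real.norm_eq_abs]
    rw [mul_one, mul_one, sq_abs, sq_abs]
    ring
  have hnorm1 : ∀ a b : ℝ, a^2 + b^2 = 1 → ‖a • e₁ + b • e₂‖ = 1 := by
    intro a b hab
    have h := hn2 a b
    rw [hab] at h
    rw [← Real.sqrt_sq (norm_nonneg (a • e₁ + b • e₂)), h, Real.sqrt_one]
  refine le_of_forall_pos_le_add (fun δ hδ => ?_)
  set C : ℝ := (2 * π / ε) * exp (η * (‖x‖ + 3)) with hC
  have hC0 : 0 < C := by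
    have := Real.pi_pos
    positivity
  set r : ℝ := min 1 (δ / C) with hr
  have hr0 : 0 < r := lt_min one_pos (by positivity)
  have hr1 : r ≤ 1 := min_le_left _ _
  set ψ : ℝ → H := fun t => x + ((r * Real.cos (t/r) - r) • e₁ + (r * Real.sin (t/r)) • e₂)
    with hψ
  set ψ' : ℝ → H := fun t => (-Real.sin (t/r)) • e₁ + (Real.cos (t/r)) • e₂ with hψ'
  have hd : ∀ t : ℝ, HasDerivAt ψ (ψ' t) t := by
    intro t
    have h1 : HasDerivAt (fun s : ℝ => s/r) (1/r) t := (hasDerivAt_id t).div_const r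
    have hc : HasDerivAt (fun s : ℝ => r * Real.cos (s/r) - r) (-Real.sin (t/r)) t := by
      have h2 := (Real.hasDerivAt_cos (t/r)).comp t h1
      have h3 := (h2.const_mul r).sub_const r
      convert h3 using 1
      all_goals first | rfl | field_simp
    have hs : HasDerivAt (fun s : ℝ => r * Real.sin (s/r)) (Real.cos (t/r)) t := by
      have h2 := (Real.hasDerivAt_sin (t/r)).comp t h1
      have h3 := h2.const_mul r
      convert h3 using 1
      all_goals first | rfl | field_simp
    exact ((hc.smul_const e₁).add (hs.smul_const e₂)).const_add x
  have hunit : ∀ t : ℝ, ‖ψ' t‖ = 1 := by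
    intro t
    apply hnorm1
    have := Real.sin_sq_add_cos_sq (t/r)
    nlinarith
  have hψ0 : ψ 0 = x := by
    simp [hψ, Real.cos_zero, Real.sin_zero, zero_div]
  have hT0 : 0 < 2 * π * r := by have := Real.pi_pos; positivity
  have hψT : ψ (2 * π * r) = x := by
    have h2 : (2 * π * r) / r = 2 * π := by
      field_simp
    simp [hψ, h2, Real.cos_two_pi, Real.sin_two_pi]
  have hnb : ∀ t ∈ Set.Icc (0:ℝ) (2 * π * r), ‖ψ t‖ ≤ ‖x‖ + 3 := by
    intro t _
    have hc1 := Real.neg_one_le_cos (t/r)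
    have hc2 := Real.cos_le_one (t/r)
    have hs1 := Real.neg_one_le_sin (t/r)
    have hs2 := Real.sin_le_one (t/r)
    have h1 : ‖(r * Real.cos (t/r) - r) • e₁‖ ≤ 2 := by
      rw [norm_smul, he1, mul_one, Real.norm_eq_abs]
      rw [abs_le]
      constructor <;> nlinarith
    have h2 : ‖(r * Real.sin (t/r)) • e₂‖ ≤ 1 := by
      rw [norm_smul, he2, mul_one, Real.norm_eq_abs]
      rw [abs_le]
      constructor <;> nlinarith
    calc ‖ψ t‖ ≤ ‖x‖ + (‖(r * Real.cos (t/r) - r) • e₁‖ + ‖(r * Real.sin (t/r)) • e₂‖) :=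
        (norm_add_le _ _).trans (by gcongr; exact norm_add_le _ _)
    _ ≤ ‖x‖ + 3 := by linarith
  have hcont : Continuous ψ := by
    apply continuous_const.add
    apply Continuous.add <;> apply Continuous.smul <;> fun_prop
  have hval : (1/ε) * (∫ t in (0:ℝ)..(2 * π * r), exp (η * ‖ψ t‖)) ≤ C * r := by
    have hintc : Continuous fun t => exp (η * ‖ψ t‖) := by fun_prop
    have h1 : (∫ t in (0:ℝ)..(2 * π * r), exp (η * ‖ψ t‖))
        ≤ ∫ _ in (0:ℝ)..(2 * π * r), exp (η * (‖x‖ + 3)) :=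
      intervalIntegral.integral_mono_on hT0.le (hintc.intervalIntegrable _ _)
        intervalIntegrable_const
        (fun t ht => exp_le_exp.2 (mul_le_mul_of_nonneg_left (hnb t ht) hη.le))
    rw [intervalIntegral.integral_const, smul_eq_mul, sub_zero] at h1
    calc (1/ε) * (∫ t in (0:ℝ)..(2 * π * r), exp (η * ‖ψ t‖))
        ≤ (1/ε) * ((2 * π * r) * exp (η * (‖x‖ + 3))) := by
          apply mul_le_mul_of_nonneg_left h1 (by positivity)
    _ = C * r := by rw [hC]; ring
  have hmem : (1/ε) * (∫ t in (0:ℝ)..(2 * π * r), exp (η * ‖ψ t‖)) ∈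
      { q : ℝ | ∃ T : ℝ, 0 < T ∧ ∃ φ φ' : ℝ → H, φ 0 = x ∧ φ T = x ∧
        (∀ t ∈ Set.Icc (0:ℝ) T, HasDerivAt φ (φ' t) t ∧ ‖φ' t‖ = 1) ∧
        q = (1/ε) * ∫ t in (0:ℝ)..T, exp (η * ‖φ t‖) } :=
    ⟨2 * π * r, hT0, ψ, ψ', hψ0, hψT, fun t _ => ⟨hd t, hunit t⟩, rfl⟩
  have h3 : pathDist ε η x x ≤ C * r := by
    unfold pathDist
    exact le_trans (csInf_le (bddBelow_set ε η hε x x) hmem) hval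
  have h4 : C * r ≤ δ := by
    have : r ≤ δ / C := min_le_right _ _
    calc C * r ≤ C * (δ / C) := by gcongr
    _ = δ := by field_simp
  linarith

/-- If no orthonormal pair exists, there are no unit-speed loops: the set is empty. -/
lemma no_loop (ε η : ℝ) (x : H)
    (h : ¬ ∃ e₁ e₂ : H, ‖e₁‖ = 1 ∧ ‖e₂‖ = 1 ∧ (inner ℝ e₁ e₂ : ℝ) = 0) :
    pathDist ε η x x ≤ 0 := by
  have hempty : { r : ℝ | ∃ T : ℝ, 0 < T ∧ ∃ ψ ψ' : ℝ → H, ψ 0 = x ∧ ψ T = x ∧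
      (∀ t ∈ Set.Icc (0:ℝ) T, HasDerivAt ψ (ψ' t) t ∧ ‖ψ' t‖ = 1) ∧
      r = (1/ε) * ∫ t in (0:ℝ)..T, exp (η * ‖ψ t‖) } = ∅ := by
    rw [Set.eq_empty_iff_forall_notMem]
    rintro r ⟨T, hT, ψ, ψ', h0, hTy, hder, rfl⟩
    set u : H := ψ' 0 with hu
    have hun : ‖u‖ = 1 := (hder 0 (Set.left_mem_Icc.2 hT.le)).2
    have hf : ∀ t ∈ Set.Icc (0:ℝ) T,
        HasDerivAt (fun s => (inner ℝ (ψ s) u : ℝ)) (inner ℝ (ψ' t) u : ℝ) t := by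
      intro t ht
      have := HasDerivAt.inner ℝ (hder t ht).1 (hasDerivAt_const t u)
      simpa using this
    have hcont : ContinuousOn (fun s => (inner ℝ (ψ s) u : ℝ)) (Set.Icc (0:ℝ) T) :=
      fun t ht => (hf t ht).continuousAt.continuousWithinAt
    obtain ⟨c, hc, hc0⟩ := exists_hasDerivAt_eq_zero hT hcont (by rw [h0, hTy])
      (fun t ht => hf t (Set.Ioo_subset_Icc_self ht))
    exact h ⟨u, ψ' c, hun, (hder c (Set.Ioo_subset_Icc_self hc)).2,
      by rw [real_inner_comm]; exact hc0⟩
  unfold pathDist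
  rw [hempty, Real.sInf_empty]

end PathDistAux

/-- Two-sided bound for the weighted path distance `d̄`:
`d̄(x,y) ≤ (‖x−y‖/ε) exp(η(‖x‖∨‖y‖))` always, and whenever `d̄(x,y) < 1`,
`d̄(x,y) ≥ (‖x−y‖/ε) exp(η max(‖x‖∨‖y‖ − J, 0))` with
`J = ε exp(−η max(‖x‖∨‖y‖ − ε, 0))`. -/
theorem stmt_15 {H : Type*} [NormedAddCommGroup H] [InnerProductSpace ℝ H]
    (ε η : ℝ) (hε : 0 < ε) (hη : 0 < η) (x y : H) :
    pathDist ε η x y ≤ (‖x - y‖ / ε) * exp (η * max ‖x‖ ‖y‖) ∧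
    (pathDist ε η x y < 1 →
      (‖x - y‖ / ε) *
          exp (η * max (max ‖x‖ ‖y‖ - ε * exp (-η * max (max ‖x‖ ‖y‖ - ε) 0)) 0)
        ≤ pathDist ε η x y) := by
  constructor
  · -- upper bound
    by_cases hxy : x = y
    · subst hxy
      have h0 : ‖x - x‖ = 0 := by simp
      rw [h0, zero_div, zero_mul]
      by_cases hd2 : ∃ e₁ e₂ : H, ‖e₁‖ = 1 ∧ ‖e₂‖ = 1 ∧ (inner ℝ e₁ e₂ : ℝ) = 0
      · obtain ⟨e₁, e₂, he1, he2, he12⟩ := hd2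
        exact PathDistAux.circle_upper ε η hε hη x he1 he2 he12
      · exact PathDistAux.no_loop ε η x hd2
    · obtain ⟨r, hrS, hrle⟩ := PathDistAux.segment_upper ε η hε hη x y hxy
      unfold pathDist
      exact le_trans (csInf_le (PathDistAux.bddBelow_set ε η hε x y) hrS) hrle
  · -- lower bound
    intro h1
    by_cases hxy : x = y
    · subst hxy
      have h0 : ‖x - x‖ = 0 := by simp
      rw [h0, zero_div, zero_mul]
      exact PathDistAux.pathDist_nonneg ε η hε x x
    · by_contra hc
      push_neg at hc
      set tgt := (‖x - y‖ / ε) *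
        exp (η * max (max ‖x‖ ‖y‖ - ε * exp (-η * max (max ‖x‖ ‖y‖ - ε) 0)) 0) with htgt
      have hne : Set.Nonempty { r : ℝ | ∃ T : ℝ, 0 < T ∧ ∃ ψ ψ' : ℝ → H, ψ 0 = x ∧ ψ T = y ∧
          (∀ t ∈ Set.Icc (0:ℝ) T, HasDerivAt ψ (ψ' t) t ∧ ‖ψ' t‖ = 1) ∧
          r = (1/ε) * ∫ t in (0:ℝ)..T, exp (η * ‖ψ t‖) } := by
        obtain ⟨r, hrS, _⟩ := PathDistAux.segment_upper ε η hε hη x y hxy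
        exact ⟨r, hrS⟩
      have hlt : pathDist ε η x y < min tgt 1 := lt_min hc h1
      unfold pathDist at hlt
      obtain ⟨r, hrS, hrlt⟩ :=
        (csInf_lt_iff (PathDistAux.bddBelow_set ε η hε x y) hne).1 hlt
      have hr1 : r < 1 := lt_of_lt_of_le hrlt (min_le_right _ _)
      have hrt : r < tgt := lt_of_lt_of_le hrlt (min_le_left _ _)
      obtain ⟨T, hT, ψ, ψ', h0, hTy, hder, rfl⟩ := hrS
      exact absurd (PathDistAux.path_cost_lower ε η hε hη x y hT h0 hTy hder hr1)
        (not_le.2 hrt)
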